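/- Let γ > 0, σ > 0, μ ∈ ℝ and a, b ∈ ℝ with a ≤ b. Set μ_C = μ − 2√3·σ²/γ, μ_D = μ + 2√3·σ²/γ, and define E30 = 1 + (3ab − √3·γ(a+b))/γ², E31 = (2√3·γ − 3(a+b))/γ², E32 = 3/γ², E40 = 1 + (√3·γ(b−a) − 3ab)/γ², E41 = 3(a+b)/γ², E42 = −3/γ², E50 = 1 + (3ab + √3·γ(a+b))/γ², E51 = (2√3·γ + 3(a+b))/γ², E52 = 3/γ². Then ∫_ℝ (1 + √3·|w−a|/γ)·exp(−√3·|w−a|/γ) · (1 + √3·|w−b|/γ)·exp(−√3·|w−b|/γ) · φ_{μ,σ}(w) dw = exp((6σ² + √3·γ(a+b−2μ))/γ²) · ((E30 + E31·μ_C + E32·(μ_C² + σ²)) · Φ((μ_C − b)/σ) + (E31 + E32·(μ_C + b)) · (σ/√(2π)) · exp(−(b−μ_C)²/(2σ²))) + exp(−√3·(b−a)/γ) · ((E40 + E41·μ + E42·(μ² + σ²)) · (Φ((b−μ)/σ) − Φ((a−μ)/σ)) + (E41 + E42·(μ + a)) · (σ/√(2π)) · exp(−(a−μ)²/(2σ²))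 − (E41 + E42·(μ + b)) · (σ/√(2π)) · exp(−(b−μ)²/(2σ²))) + exp((6σ² − √3·γ(a+b−2μ))/γ²) · ((E50 − E51·μ_D + E52·(μ_D² + σ²)) · Φ((a − μ_D)/σ) + (E51 + E52·(−μ_D − a)) · (σ/√(2π)) · exp(−(a−μ_D)²/(2σ²))). -/

import Mathlib

open MeasureTheory Real

/-- Standard normal cumulative distribution function. -/
noncomputable def Phi (t : ℝ) : ℝ :=
  ∫ u in Set.Iic t, (Real.sqrt (2 * Real.pi))⁻¹ * Real.exp (-u ^ 2 / 2)

/-- Normal density with mean μ and standard deviation σ. -/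
noncomputable def normalPDF (μ σ x : ℝ) : ℝ :=
  (σ * Real.sqrt (2 * Real.pi))⁻¹ * Real.exp (-(x - μ) ^ 2 / (2 * σ ^ 2))

-- integrability helpers
lemma int_pow0 {d : ℝ} (hd : 0 < d) : Integrable (fun x : ℝ => Real.exp (-d * x^2)) :=
  integrable_exp_neg_mul_sq hd

lemma int_pow1 {d : ℝ} (hd : 0 < d) : Integrable (fun x : ℝ => x * Real.exp (-d * x^2)) :=
  integrable_mul_exp_neg_mul_sq hd

lemma int_pow2 {d : ℝ} (hd : 0 < d) : Integrable (fun x : ℝ => x^2 * Real.exp (-d * x^2)) := by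
  have := integrable_rpow_mul_exp_neg_mul_sq hd (s := 2) (by norm_num)
  have h : ∀ x : ℝ, x ^ (2:ℝ) = x ^ (2:ℕ) := fun x => by
    rw [show (2:ℝ) = ((2:ℕ):ℝ) by norm_num, Real.rpow_natCast]
  simpa [h] using this

lemma integrable_quad_gauss (c0 c1 c2 ν σ : ℝ) (hσ : 0 < σ) :
    Integrable (fun w : ℝ => (c0 + c1*w + c2*w^2) * normalPDF ν σ w) := by
  have hd : 0 < (2*σ^2)⁻¹ := by positivity
  set k : ℝ := (σ * Real.sqrt (2 * Real.pi))⁻¹ with hk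
  have base : Integrable (fun x : ℝ =>
      (c0 + c1*(x+ν) + c2*(x+ν)^2) * (k * Real.exp (-(2*σ^2)⁻¹ * x^2))) := by
    have h : (fun x : ℝ => (c0 + c1*(x+ν) + c2*(x+ν)^2) * (k * Real.exp (-(2*σ^2)⁻¹ * x^2)))
        = fun x : ℝ => ((c0 + c1*ν + c2*ν^2)*k) * Real.exp (-(2*σ^2)⁻¹ * x^2)
          + ((c1 + 2*c2*ν)*k) * (x * Real.exp (-(2*σ^2)⁻¹ * x^2))
          + (c2*k) * (x^2 * Real.exp (-(2*σ^2)⁻¹ * x^2)) := by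
      funext x; ring
    rw [h]
    exact (((int_pow0 hd).const_mul _).add ((int_pow1 hd).const_mul _)).add
      ((int_pow2 hd).const_mul _)
  have := base.comp_sub_right ν
  have h2 : (fun w : ℝ => (c0 + c1*((w - ν)+ν) + c2*((w - ν)+ν)^2)
      * (k * Real.exp (-(2*σ^2)⁻¹ * (w - ν)^2)))
      = fun w : ℝ => (c0 + c1*w + c2*w^2) * normalPDF ν σ w := by
    funext w
    have : -(2*σ^2)⁻¹ * (w - ν)^2 = -(w-ν)^2/(2*σ^2) := by ring
    simp only [normalPDF, this, hk]
    ring_nf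
  rwa [h2] at this

lemma std_eq (u : ℝ) : -u^2/2 = -(2:ℝ)⁻¹ * u^2 := by ring

lemma tendsto_gauss_atBot : Filter.Tendsto (fun u : ℝ => Real.exp (-u^2/2)) Filter.atBot (nhds 0) := by
  have h1 : Filter.Tendsto (fun u : ℝ => u^2) Filter.atBot Filter.atTop := by
    have h := (Filter.tendsto_pow_atTop (α := ℝ) (n := 2) two_ne_zero).comp
      Filter.tendsto_neg_atBot_atTop
    refine h.congr fun u => ?_
    simp [Function.comp]
  have h2 : Filter.Tendsto (fun u : ℝ => -u^2/2) Filter.atBot Filter.atBot := by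
    apply Filter.Tendsto.atBot_div_const (by norm_num : (0:ℝ) < 2)
    exact Filter.tendsto_neg_atTop_atBot.comp h1
  exact Real.tendsto_exp_atBot.comp h2

lemma tendsto_id_gauss_atTop :
    Filter.Tendsto (fun u : ℝ => u * Real.exp (-u^2/2)) Filter.atTop (nhds 0) := by
  have hO : (fun u : ℝ => u ^ (1:ℝ) * Real.exp (-(2:ℝ)⁻¹ * u^2)) =o[Filter.atTop]
      (fun u : ℝ => Real.exp (-(1/2:ℝ) * u)) :=
    rpow_mul_exp_neg_mul_sq_isLittleO_exp_neg (by norm_num) 1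
  have hg : Filter.Tendsto (fun u : ℝ => Real.exp (-(1/2:ℝ) * u)) Filter.atTop (nhds 0) := by
    apply Real.tendsto_exp_atBot.comp
    exact Filter.Tendsto.const_mul_atTop_of_neg (by norm_num) Filter.tendsto_id
  have h := hO.isBigO.trans_tendsto hg
  have heq : (fun u : ℝ => u ^ (1:ℝ) * Real.exp (-(2:ℝ)⁻¹ * u^2))
      =ᶠ[Filter.atTop] (fun u : ℝ => u * Real.exp (-u^2/2)) := by
    filter_upwards [Filter.eventually_ge_atTop (0:ℝ)] with u hu
    rw [Real.rpow_one, std_eq]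
  exact (Filter.tendsto_congr' heq).mp h

lemma tendsto_id_gauss_atBot :
    Filter.Tendsto (fun u : ℝ => u * Real.exp (-u^2/2)) Filter.atBot (nhds 0) := by
  have h := (tendsto_id_gauss_atTop.comp Filter.tendsto_neg_atBot_atTop).neg
  rw [neg_zero] at h
  refine h.congr fun u => ?_
  simp [Function.comp, neg_pow]

lemma stdint1 : Integrable (fun u : ℝ => u * ((Real.sqrt (2*Real.pi))⁻¹ * Real.exp (-u^2/2))) := by
  have h := (int_pow1 (d := (2:ℝ)⁻¹) (by norm_num)).const_mul (Real.sqrt (2*Real.pi))⁻¹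
  exact h.congr (Filter.Eventually.of_forall fun u => by simp only [std_eq]; ring)

lemma stdint2 : Integrable (fun u : ℝ => u^2 * ((Real.sqrt (2*Real.pi))⁻¹ * Real.exp (-u^2/2))) := by
  have h := (int_pow2 (d := (2:ℝ)⁻¹) (by norm_num)).const_mul (Real.sqrt (2*Real.pi))⁻¹
  exact h.congr (Filter.Eventually.of_forall fun u => by simp only [std_eq]; ring)

lemma stdint0 : Integrable (fun u : ℝ => (Real.sqrt (2*Real.pi))⁻¹ * Real.exp (-u^2/2)) := by
  have h := (int_pow0 (d := (2:ℝ)⁻¹) (by norm_num)).const_mul (Real.sqrt (2*Real.pi))⁻¹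
  exact h.congr (Filter.Eventually.of_forall fun u => by simp only [std_eq])

lemma std_M1 (z : ℝ) :
    ∫ u in Set.Iic z, u * ((Real.sqrt (2*Real.pi))⁻¹ * Real.exp (-u^2/2))
      = -((Real.sqrt (2*Real.pi))⁻¹ * Real.exp (-z^2/2)) := by
  have hder : ∀ x ∈ Set.Iic z, HasDerivAt
      (fun u : ℝ => -((Real.sqrt (2*Real.pi))⁻¹ * Real.exp (-u^2/2)))
      (x * ((Real.sqrt (2*Real.pi))⁻¹ * Real.exp (-x^2/2))) x := by
    intro x _
    have h1 : HasDerivAt (fun u : ℝ => -u^2/2) (-x) x := by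
      have := ((hasDerivAt_pow 2 x).neg.div_const 2)
      simpa using this.congr_deriv (by push_cast; ring)
    have h2 := (h1.exp.const_mul (Real.sqrt (2*Real.pi))⁻¹).neg
    exact h2.congr_deriv (by ring)
  have htend : Filter.Tendsto (fun u : ℝ => -((Real.sqrt (2*Real.pi))⁻¹ * Real.exp (-u^2/2)))
      Filter.atBot (nhds 0) := by
    have := (tendsto_gauss_atBot.const_mul (Real.sqrt (2*Real.pi))⁻¹).neg
    simpa using this
  have := integral_Iic_of_hasDerivAt_of_tendsto' hder stdint1.integrableOn htend
  simpa using this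

lemma std_M2 (z : ℝ) :
    ∫ u in Set.Iic z, u^2 * ((Real.sqrt (2*Real.pi))⁻¹ * Real.exp (-u^2/2))
      = Phi z - z * ((Real.sqrt (2*Real.pi))⁻¹ * Real.exp (-z^2/2)) := by
  have hder : ∀ x ∈ Set.Iic z, HasDerivAt
      (fun u : ℝ => -(u * ((Real.sqrt (2*Real.pi))⁻¹ * Real.exp (-u^2/2))))
      (x^2 * ((Real.sqrt (2*Real.pi))⁻¹ * Real.exp (-x^2/2))
        - (Real.sqrt (2*Real.pi))⁻¹ * Real.exp (-x^2/2)) x := by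
    intro x _
    have h1 : HasDerivAt (fun u : ℝ => -u^2/2) (-x) x := by
      have := ((hasDerivAt_pow 2 x).neg.div_const 2)
      simpa using this.congr_deriv (by push_cast; ring)
    have h2 : HasDerivAt (fun u : ℝ => (Real.sqrt (2*Real.pi))⁻¹ * Real.exp (-u^2/2))
        ((Real.sqrt (2*Real.pi))⁻¹ * (Real.exp (-x^2/2) * (-x))) x :=
      h1.exp.const_mul _
    have h3 := ((hasDerivAt_id x).mul h2).neg
    exact h3.congr_deriv (by simp only [id_eq]; ring)
  have htend : Filter.Tendsto
      (fun u : ℝ => -(u * ((Real.sqrt (2*Real.pi))⁻¹ * Real.exp (-u^2/2))))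
      Filter.atBot (nhds 0) := by
    have h := (tendsto_id_gauss_atBot.const_mul (Real.sqrt (2*Real.pi))⁻¹).neg
    simp only [mul_zero, neg_zero] at h
    refine h.congr fun u => ?_
    ring
  have hint : IntegrableOn (fun x : ℝ => x^2 * ((Real.sqrt (2*Real.pi))⁻¹ * Real.exp (-x^2/2))
      - (Real.sqrt (2*Real.pi))⁻¹ * Real.exp (-x^2/2)) (Set.Iic z) :=
    (stdint2.sub stdint0).integrableOn
  have h := integral_Iic_of_hasDerivAt_of_tendsto' hder hint htend
  rw [integral_sub stdint2.integrableOn stdint0.integrableOn] at h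
  have hPhi : ∫ u in Set.Iic z, (Real.sqrt (2*Real.pi))⁻¹ * Real.exp (-u^2/2) = Phi z := by
    rw [Phi]
  rw [hPhi] at h
  have := congrArg (fun t => t + Phi z) h
  simp only [sub_zero] at h ⊢
  linarith [h]

lemma reflect_integral (F : ℝ → ℝ) (t : ℝ) :
    ∫ w in Set.Ioi t, F w = ∫ x in Set.Iic (-t), F (-x) := by
  rw [← integral_Ici_eq_integral_Ioi]
  have himg : (fun x : ℝ => -x) '' Set.Iic (-t) = Set.Ici t := by
    ext x
    simp only [Set.mem_image, Set.mem_Iic, Set.mem_Ici]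
    constructor
    · rintro ⟨y, hy, rfl⟩; linarith
    · intro hx; exact ⟨-x, by linarith, by ring⟩
  rw [← himg, integral_image_eq_integral_abs_deriv_smul measurableSet_Iic
    (fun x _ => (hasDerivAt_neg x).hasDerivWithinAt) (fun x _ y _ h => by linarith) F]
  simp

lemma scale_integral (F : ℝ → ℝ) (σ ν t : ℝ) (hσ : 0 < σ) :
    ∫ w in Set.Iic t, F w = ∫ u in Set.Iic ((t-ν)/σ), σ * F (σ*u+ν) := by
  have himg : (fun u : ℝ => σ*u+ν) '' Set.Iic ((t-ν)/σ) = Set.Iic t := by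
    ext x
    simp only [Set.mem_image, Set.mem_Iic]
    constructor
    · rintro ⟨y, hy, rfl⟩
      have := mul_le_mul_of_nonneg_left hy hσ.le
      rw [mul_div_cancel₀ _ hσ.ne'] at this
      linarith
    · intro hx
      exact ⟨(x-ν)/σ, by gcongr <;> linarith, by field_simp; ring⟩
  have hder : ∀ x ∈ Set.Iic ((t-ν)/σ),
      HasDerivWithinAt (fun u : ℝ => σ*u+ν) σ (Set.Iic ((t-ν)/σ)) x := by
    intro x _
    have h := (((hasDerivAt_id x).const_mul σ).add_const ν).hasDerivWithinAt
      (s := Set.Iic ((t-ν)/σ))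
    rw [mul_one] at h
    exact h
  rw [← himg, integral_image_eq_integral_abs_deriv_smul measurableSet_Iic hder
    (fun x _ y _ h => by
      exact mul_left_cancel₀ hσ.ne' (by linarith [h] : σ * x = σ * y)) F]
  simp [abs_of_pos hσ, mul_one]

lemma gauss_quad_Iic (c0 c1 c2 ν σ t : ℝ) (hσ : 0 < σ) :
    ∫ w in Set.Iic t, (c0 + c1*w + c2*w^2) * normalPDF ν σ w
      = (c0 + c1*ν + c2*(ν^2+σ^2)) * Phi ((t-ν)/σ)
        - (c1 + c2*(ν+t)) * (σ / Real.sqrt (2*Real.pi)) * Real.exp (-(t-ν)^2/(2*σ^2)) := by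
  set z := (t-ν)/σ with hz
  set A := c0 + c1*ν + c2*ν^2 with hA
  set B := c1*σ + 2*c2*σ*ν with hB
  set C := c2*σ^2 with hC
  rw [scale_integral _ σ ν t hσ]
  have hpt : ∀ u : ℝ, σ * ((c0 + c1*(σ*u+ν) + c2*(σ*u+ν)^2) * normalPDF ν σ (σ*u+ν))
      = A * ((Real.sqrt (2*Real.pi))⁻¹ * Real.exp (-u^2/2))
        + B * (u * ((Real.sqrt (2*Real.pi))⁻¹ * Real.exp (-u^2/2)))
        + C * (u^2 * ((Real.sqrt (2*Real.pi))⁻¹ * Real.exp (-u^2/2))) := by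
    intro u
    have harg : -(σ*u+ν-ν)^2/(2*σ^2) = -u^2/2 := by
      field_simp
      ring
    rw [normalPDF, harg, mul_inv, hA, hB, hC]
    field_simp
    ring
  rw [setIntegral_congr_fun measurableSet_Iic (fun u _ => hpt u)]
  have e0 : ∫ u in Set.Iic z, A * ((Real.sqrt (2*Real.pi))⁻¹ * Real.exp (-u^2/2))
      = A * Phi z := by
    rw [integral_const_mul]; rfl
  have e1 : ∫ u in Set.Iic z, B * (u * ((Real.sqrt (2*Real.pi))⁻¹ * Real.exp (-u^2/2)))
      = B * -((Real.sqrt (2*Real.pi))⁻¹ * Real.exp (-z^2/2)) := by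
    rw [integral_const_mul, std_M1]
  have e2 : ∫ u in Set.Iic z, C * (u^2 * ((Real.sqrt (2*Real.pi))⁻¹ * Real.exp (-u^2/2)))
      = C * (Phi z - z * ((Real.sqrt (2*Real.pi))⁻¹ * Real.exp (-z^2/2))) := by
    rw [integral_const_mul, std_M2]
  rw [integral_add (by exact ((stdint0.const_mul _).add ((stdint1.const_mul _))).integrableOn)
      (stdint2.const_mul _).integrableOn,
    integral_add (stdint0.const_mul _).integrableOn (stdint1.const_mul _).integrableOn,
    e0, e1, e2]
  have harg2 : -z^2/2 = -(t-ν)^2/(2*σ^2) := by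
    rw [hz]; field_simp
  rw [harg2]
  have hexpand : (Real.sqrt (2*Real.pi))⁻¹ = σ⁻¹ * (σ / Real.sqrt (2*Real.pi)) := by
    field_simp
  rw [hexpand, hA, hB, hC, hz]
  field_simp
  ring

lemma gauss_quad_Ioi (c0 c1 c2 ν σ t : ℝ) (hσ : 0 < σ) :
    ∫ w in Set.Ioi t, (c0 + c1*w + c2*w^2) * normalPDF ν σ w
      = (c0 + c1*ν + c2*(ν^2+σ^2)) * Phi ((ν-t)/σ)
        + (c1 + c2*(ν+t)) * (σ / Real.sqrt (2*Real.pi)) * Real.exp (-(t-ν)^2/(2*σ^2)) := by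
  rw [reflect_integral]
  have hpt : ∀ x : ℝ, (c0 + c1*(-x) + c2*(-x)^2) * normalPDF ν σ (-x)
      = (c0 + (-c1)*x + c2*x^2) * normalPDF (-ν) σ x := by
    intro x
    have : -(-x - ν)^2/(2*σ^2) = -(x - -ν)^2/(2*σ^2) := by ring_nf
    rw [normalPDF, normalPDF, this]
    ring
  rw [setIntegral_congr_fun measurableSet_Iic (fun x _ => hpt x),
    gauss_quad_Iic c0 (-c1) c2 (-ν) σ (-t) hσ]
  have h1 : (-t - -ν)/σ = (ν-t)/σ := by ring_nf
  have h2 : -(-t - -ν)^2/(2*σ^2) = -(t-ν)^2/(2*σ^2) := by ring_nf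
  rw [h1, h2]
  ring

lemma gauss_quad_Ioc (c0 c1 c2 ν σ a b : ℝ) (hσ : 0 < σ) (hab : a ≤ b) :
    ∫ w in Set.Ioc a b, (c0 + c1*w + c2*w^2) * normalPDF ν σ w
      = (c0 + c1*ν + c2*(ν^2+σ^2)) * (Phi ((b-ν)/σ) - Phi ((a-ν)/σ))
        + (c1 + c2*(ν+a)) * (σ / Real.sqrt (2*Real.pi)) * Real.exp (-(a-ν)^2/(2*σ^2))
        - (c1 + c2*(ν+b)) * (σ / Real.sqrt (2*Real.pi)) * Real.exp (-(b-ν)^2/(2*σ^2)) := by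
  have hsplit : (∫ w in Set.Iic a, (c0 + c1*w + c2*w^2) * normalPDF ν σ w)
      + ∫ w in Set.Ioc a b, (c0 + c1*w + c2*w^2) * normalPDF ν σ w
      = ∫ w in Set.Iic b, (c0 + c1*w + c2*w^2) * normalPDF ν σ w := by
    rw [← setIntegral_union (Set.Iic_disjoint_Ioc le_rfl) measurableSet_Ioc
      (integrable_quad_gauss c0 c1 c2 ν σ hσ).integrableOn
      (integrable_quad_gauss c0 c1 c2 ν σ hσ).integrableOn,
      Set.Iic_union_Ioc_eq_Iic hab]
  have h := hsplit
  rw [gauss_quad_Iic c0 c1 c2 ν σ a hσ, gauss_quad_Iic c0 c1 c2 ν σ b hσ] at h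
  linarith [h]

lemma assemble (P1 P2 Q e1 e2 e3 q eB k : ℝ) (hpoly : P1 * P2 = Q)
    (hexp : e1 * e2 * e3 = q * eB) :
    P1 * e1 * (P2 * e2) * (k * e3) = q * (Q * (k * eB)) := by
  calc P1 * e1 * (P2 * e2) * (k * e3) = (P1 * P2) * (e1 * e2 * e3) * k := by ring
    _ = Q * (q * eB) * k := by rw [hpoly, hexp]
    _ = q * (Q * (k * eB)) := by ring

theorem integral_matern15_sq_mul_normalPDF (γ σ μ a b μC μD : ℝ)
    (E30 E31 E32 E40 E41 E42 E50 E51 E52 : ℝ)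
    (hγ : 0 < γ) (hσ : 0 < σ) (hab : a ≤ b)
    (hμC : μC = μ - 2 * Real.sqrt 3 * σ ^ 2 / γ)
    (hμD : μD = μ + 2 * Real.sqrt 3 * σ ^ 2 / γ)
    (hE30 : E30 = 1 + (3 * a * b - Real.sqrt 3 * γ * (a + b)) / γ ^ 2)
    (hE31 : E31 = (2 * Real.sqrt 3 * γ - 3 * (a + b)) / γ ^ 2)
    (hE32 : E32 = 3 / γ ^ 2)
    (hE40 : E40 = 1 + (Real.sqrt 3 * γ * (b - a) - 3 * a * b) / γ ^ 2)
    (hE41 : E41 = 3 * (a + b) / γ ^ 2)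
    (hE42 : E42 = -3 / γ ^ 2)
    (hE50 : E50 = 1 + (3 * a * b + Real.sqrt 3 * γ * (a + b)) / γ ^ 2)
    (hE51 : E51 = (2 * Real.sqrt 3 * γ + 3 * (a + b)) / γ ^ 2)
    (hE52 : E52 = 3 / γ ^ 2) :
    ∫ w : ℝ,
        (1 + Real.sqrt 3 * |w - a| / γ) * Real.exp (-(Real.sqrt 3) * |w - a| / γ) *
          ((1 + Real.sqrt 3 * |w - b| / γ) * Real.exp (-(Real.sqrt 3) * |w - b| / γ)) *
          normalPDF μ σ w =
      Real.exp ((6 * σ ^ 2 + Real.sqrt 3 * γ * (a + b - 2 * μ)) / γ ^ 2) *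
        ((E30 + E31 * μC + E32 * (μC ^ 2 + σ ^ 2)) * Phi ((μC - b) / σ) +
          (E31 + E32 * (μC + b)) * (σ / Real.sqrt (2 * Real.pi)) *
            Real.exp (-(b - μC) ^ 2 / (2 * σ ^ 2))) +
      Real.exp (-(Real.sqrt 3) * (b - a) / γ) *
        ((E40 + E41 * μ + E42 * (μ ^ 2 + σ ^ 2)) * (Phi ((b - μ) / σ) - Phi ((a - μ) / σ)) +
          (E41 + E42 * (μ + a)) * (σ / Real.sqrt (2 * Real.pi)) *
            Real.exp (-(a - μ) ^ 2 / (2 * σ ^ 2)) -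
          (E41 + E42 * (μ + b)) * (σ / Real.sqrt (2 * Real.pi)) *
            Real.exp (-(b - μ) ^ 2 / (2 * σ ^ 2))) +
      Real.exp ((6 * σ ^ 2 - Real.sqrt 3 * γ * (a + b - 2 * μ)) / γ ^ 2) *
        ((E50 - E51 * μD + E52 * (μD ^ 2 + σ ^ 2)) * Phi ((a - μD) / σ) +
          (E51 + E52 * (-μD - a)) * (σ / Real.sqrt (2 * Real.pi)) *
            Real.exp (-(a - μD) ^ 2 / (2 * σ ^ 2))) := by
  subst hμC hμD hE30 hE31 hE32 hE40 hE41 hE42 hE50 hE51 hE52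
  have h3 : Real.sqrt 3 ^ 2 = 3 := Real.sq_sqrt (by norm_num)
  -- region Iic a
  have hr5 : ∀ w ∈ Set.Iic a,
      (1 + Real.sqrt 3 * |w - a| / γ) * Real.exp (-(Real.sqrt 3) * |w - a| / γ) *
        ((1 + Real.sqrt 3 * |w - b| / γ) * Real.exp (-(Real.sqrt 3) * |w - b| / γ)) *
        normalPDF μ σ w
      = Real.exp ((6 * σ ^ 2 - Real.sqrt 3 * γ * (a + b - 2 * μ)) / γ ^ 2) *
        (((1 + (3 * a * b + Real.sqrt 3 * γ * (a + b)) / γ ^ 2)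
            + (-((2 * Real.sqrt 3 * γ + 3 * (a + b)) / γ ^ 2)) * w
            + (3 / γ ^ 2) * w ^ 2) * normalPDF (μ + 2 * Real.sqrt 3 * σ ^ 2 / γ) σ w) := by
    intro w hw
    have hw' : w ≤ a := hw
    rw [abs_of_nonpos (by linarith : w - a ≤ 0),
      abs_of_nonpos (by linarith : w - b ≤ 0), normalPDF, normalPDF]
    have hpoly : (1 + Real.sqrt 3 * -(w - a) / γ) * (1 + Real.sqrt 3 * -(w - b) / γ)
        = (1 + (3 * a * b + Real.sqrt 3 * γ * (a + b)) / γ ^ 2)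
            + (-((2 * Real.sqrt 3 * γ + 3 * (a + b)) / γ ^ 2)) * w
            + (3 / γ ^ 2) * w ^ 2 := by
      field_simp
      ring_nf
      rw [h3]
      ring
    have hexp : Real.exp (-(Real.sqrt 3) * -(w - a) / γ)
          * Real.exp (-(Real.sqrt 3) * -(w - b) / γ)
          * Real.exp (-(w - μ) ^ 2 / (2 * σ ^ 2))
        = Real.exp ((6 * σ ^ 2 - Real.sqrt 3 * γ * (a + b - 2 * μ)) / γ ^ 2)
          * Real.exp (-(w - (μ + 2 * Real.sqrt 3 * σ ^ 2 / γ)) ^ 2 / (2 * σ ^ 2)) := by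
      rw [← Real.exp_add, ← Real.exp_add, ← Real.exp_add]
      congr 1
      field_simp
      ring_nf
      rw [h3]
      ring
    exact assemble _ _ _ _ _ _ _ _ _ hpoly hexp
  -- region Ioc a b
  have hr4 : ∀ w ∈ Set.Ioc a b,
      (1 + Real.sqrt 3 * |w - a| / γ) * Real.exp (-(Real.sqrt 3) * |w - a| / γ) *
        ((1 + Real.sqrt 3 * |w - b| / γ) * Real.exp (-(Real.sqrt 3) * |w - b| / γ)) *
        normalPDF μ σ w
      = Real.exp (-(Real.sqrt 3) * (b - a) / γ) *
        (((1 + (Real.sqrt 3 * γ * (b - a) - 3 * a * b) / γ ^ 2)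
            + (3 * (a + b) / γ ^ 2) * w
            + (-3 / γ ^ 2) * w ^ 2) * normalPDF μ σ w) := by
    intro w hw
    rw [abs_of_nonneg (by linarith [hw.1] : (0:ℝ) ≤ w - a),
      abs_of_nonpos (by linarith [hw.2] : w - b ≤ 0), normalPDF]
    have hpoly : (1 + Real.sqrt 3 * (w - a) / γ) * (1 + Real.sqrt 3 * -(w - b) / γ)
        = (1 + (Real.sqrt 3 * γ * (b - a) - 3 * a * b) / γ ^ 2)
            + (3 * (a + b) / γ ^ 2) * w + (-3 / γ ^ 2) * w ^ 2 := by
      field_simp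
      ring_nf
      rw [h3]
      ring
    have hexp : Real.exp (-(Real.sqrt 3) * (w - a) / γ)
          * Real.exp (-(Real.sqrt 3) * -(w - b) / γ)
          * Real.exp (-(w - μ) ^ 2 / (2 * σ ^ 2))
        = Real.exp (-(Real.sqrt 3) * (b - a) / γ)
          * Real.exp (-(w - μ) ^ 2 / (2 * σ ^ 2)) := by
      rw [← Real.exp_add, ← Real.exp_add, ← Real.exp_add]
      congr 1
      field_simp
      ring
    exact assemble _ _ _ _ _ _ _ _ _ hpoly hexp
  -- region Ioi b
  have hr3 : ∀ w ∈ Set.Ioi b,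
      (1 + Real.sqrt 3 * |w - a| / γ) * Real.exp (-(Real.sqrt 3) * |w - a| / γ) *
        ((1 + Real.sqrt 3 * |w - b| / γ) * Real.exp (-(Real.sqrt 3) * |w - b| / γ)) *
        normalPDF μ σ w
      = Real.exp ((6 * σ ^ 2 + Real.sqrt 3 * γ * (a + b - 2 * μ)) / γ ^ 2) *
        (((1 + (3 * a * b - Real.sqrt 3 * γ * (a + b)) / γ ^ 2)
            + ((2 * Real.sqrt 3 * γ - 3 * (a + b)) / γ ^ 2) * w
            + (3 / γ ^ 2) * w ^ 2) * normalPDF (μ - 2 * Real.sqrt 3 * σ ^ 2 / γ) σ w) := by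
    intro w hw
    have hw' : b < w := hw
    rw [abs_of_nonneg (by linarith : (0:ℝ) ≤ w - a),
      abs_of_nonneg (by linarith : (0:ℝ) ≤ w - b), normalPDF, normalPDF]
    have hpoly : (1 + Real.sqrt 3 * (w - a) / γ) * (1 + Real.sqrt 3 * (w - b) / γ)
        = (1 + (3 * a * b - Real.sqrt 3 * γ * (a + b)) / γ ^ 2)
            + ((2 * Real.sqrt 3 * γ - 3 * (a + b)) / γ ^ 2) * w
            + (3 / γ ^ 2) * w ^ 2 := by
      field_simp
      ring_nf
      rw [h3]
      ring
    have hexp : Real.exp (-(Real.sqrt 3) * (w - a) / γ)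
          * Real.exp (-(Real.sqrt 3) * (w - b) / γ)
          * Real.exp (-(w - μ) ^ 2 / (2 * σ ^ 2))
        = Real.exp ((6 * σ ^ 2 + Real.sqrt 3 * γ * (a + b - 2 * μ)) / γ ^ 2)
          * Real.exp (-(w - (μ - 2 * Real.sqrt 3 * σ ^ 2 / γ)) ^ 2 / (2 * σ ^ 2)) := by
      rw [← Real.exp_add, ← Real.exp_add, ← Real.exp_add]
      congr 1
      field_simp
      ring_nf
      rw [h3]
      ring
    exact assemble _ _ _ _ _ _ _ _ _ hpoly hexp
  -- integrability on regions
  have hint5 := ((integrable_quad_gauss (1 + (3 * a * b + Real.sqrt 3 * γ * (a + b)) / γ ^ 2)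
      (-((2 * Real.sqrt 3 * γ + 3 * (a + b)) / γ ^ 2)) (3 / γ ^ 2)
      (μ + 2 * Real.sqrt 3 * σ ^ 2 / γ) σ hσ).const_mul
      (Real.exp ((6 * σ ^ 2 - Real.sqrt 3 * γ * (a + b - 2 * μ)) / γ ^ 2)))
  have hint4 := ((integrable_quad_gauss (1 + (Real.sqrt 3 * γ * (b - a) - 3 * a * b) / γ ^ 2)
      (3 * (a + b) / γ ^ 2) (-3 / γ ^ 2) μ σ hσ).const_mul
      (Real.exp (-(Real.sqrt 3) * (b - a) / γ)))
  have hint3 := ((integrable_quad_gauss (1 + (3 * a * b - Real.sqrt 3 * γ * (a + b)) / γ ^ 2)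
      ((2 * Real.sqrt 3 * γ - 3 * (a + b)) / γ ^ 2) (3 / γ ^ 2)
      (μ - 2 * Real.sqrt 3 * σ ^ 2 / γ) σ hσ).const_mul
      (Real.exp ((6 * σ ^ 2 + Real.sqrt 3 * γ * (a + b - 2 * μ)) / γ ^ 2)))
  have hI5 : IntegrableOn (fun w : ℝ =>
      (1 + Real.sqrt 3 * |w - a| / γ) * Real.exp (-(Real.sqrt 3) * |w - a| / γ) *
        ((1 + Real.sqrt 3 * |w - b| / γ) * Real.exp (-(Real.sqrt 3) * |w - b| / γ)) *
        normalPDF μ σ w) (Set.Iic a) :=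
    hint5.integrableOn.congr_fun (fun w hw => (hr5 w hw).symm) measurableSet_Iic
  have hI4 : IntegrableOn (fun w : ℝ =>
      (1 + Real.sqrt 3 * |w - a| / γ) * Real.exp (-(Real.sqrt 3) * |w - a| / γ) *
        ((1 + Real.sqrt 3 * |w - b| / γ) * Real.exp (-(Real.sqrt 3) * |w - b| / γ)) *
        normalPDF μ σ w) (Set.Ioc a b) :=
    hint4.integrableOn.congr_fun (fun w hw => (hr4 w hw).symm) measurableSet_Ioc
  have hI3 : IntegrableOn (fun w : ℝ =>
      (1 + Real.sqrt 3 * |w - a| / γ) * Real.exp (-(Real.sqrt 3) * |w - a| / γ) *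
        ((1 + Real.sqrt 3 * |w - b| / γ) * Real.exp (-(Real.sqrt 3) * |w - b| / γ)) *
        normalPDF μ σ w) (Set.Ioi b) :=
    hint3.integrableOn.congr_fun (fun w hw => (hr3 w hw).symm) measurableSet_Ioi
  have hIoi_a : IntegrableOn (fun w : ℝ =>
      (1 + Real.sqrt 3 * |w - a| / γ) * Real.exp (-(Real.sqrt 3) * |w - a| / γ) *
        ((1 + Real.sqrt 3 * |w - b| / γ) * Real.exp (-(Real.sqrt 3) * |w - b| / γ)) *
        normalPDF μ σ w) (Set.Ioi a) := by
    rw [← Set.Ioc_union_Ioi_eq_Ioi hab, integrableOn_union]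
    exact ⟨hI4, hI3⟩
  rw [← intervalIntegral.integral_Iic_add_Ioi hI5 hIoi_a, ← Set.Ioc_union_Ioi_eq_Ioi hab,
    setIntegral_union (Set.Ioc_disjoint_Ioi le_rfl) measurableSet_Ioi hI4 hI3,
    setIntegral_congr_fun measurableSet_Iic hr5,
    setIntegral_congr_fun measurableSet_Ioc hr4,
    setIntegral_congr_fun measurableSet_Ioi hr3,
    integral_const_mul, integral_const_mul, integral_const_mul,
    gauss_quad_Iic _ _ _ _ _ _ hσ,
    gauss_quad_Ioc _ _ _ _ _ _ _ hσ hab,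
    gauss_quad_Ioi _ _ _ _ _ _ hσ]
  ring
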